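/- Let Q ⊂ ℝⁿ be a cube of sidelength δ/ν (0 < δ ≤ ν ≤ 1), and let T be the δ-neighbourhood of an affine subspace A + x₀ of ℝⁿ, where the linear part A is within distance ν (in the Grassmannian metric, i.e., in operator-norm distance of orthogonal projections) of a fixed subspace V. If T ∩ Q ≠ ∅, then there exists a translate V + y of V such that T ∩ Q is contained in the Cδ-neighbourhood of V + y, where C depends only on n. -/

import Mathlib

open scoped RealInnerProductSpace


/-- The orthogonal projection onto a subspace, as a continuous linear map on the
ambient Euclidean space. -/
noncomputable def projCLM {n : ℕ} (K : Submodule ℝ (EuclideanSpace ℝ (Fin n))) :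
    EuclideanSpace ℝ (Fin n) →L[ℝ] EuclideanSpace ℝ (Fin n) :=
  K.subtypeL.comp K.orthogonalProjectionOnto

lemma projCLM_mem {n : ℕ} (K : Submodule ℝ (EuclideanSpace ℝ (Fin n)))
    (w : EuclideanSpace ℝ (Fin n)) : projCLM K w ∈ K :=
  (K.orthogonalProjectionOnto w).2

lemma sub_projCLM_mem_orthogonal {n : ℕ} (K : Submodule ℝ (EuclideanSpace ℝ (Fin n)))
    (w : EuclideanSpace ℝ (Fin n)) : w - projCLM K w ∈ Kᗮ :=
  K.sub_starProjection_mem_orthogonal w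

lemma norm_sub_projCLM_le {n : ℕ} (K : Submodule ℝ (EuclideanSpace ℝ (Fin n)))
    (w : EuclideanSpace ℝ (Fin n)) : ‖w - projCLM K w‖ ≤ ‖w‖ := by
  have h0 : (inner ℝ (projCLM K w) (w - projCLM K w) : ℝ) = 0 :=
    Submodule.inner_right_of_mem_orthogonal (projCLM_mem K w) (sub_projCLM_mem_orthogonal K w)
  have hpyth := norm_add_sq_eq_norm_sq_add_norm_sq_real h0
  have h1 : projCLM K w + (w - projCLM K w) = w := by abel
  rw [h1] at hpyth
  nlinarith [norm_nonneg (projCLM K w), norm_nonneg (w - projCLM K w), norm_nonneg w]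

lemma projCLM_eq_self {n : ℕ} {K : Submodule ℝ (EuclideanSpace ℝ (Fin n))}
    {w : EuclideanSpace ℝ (Fin n)} (hw : w ∈ K) : projCLM K w = w := by
  exact (Submodule.starProjection_eq_self_iff (K := K)).2 hw

/-- Within a cube of sidelength `δ/ν`, the `δ`-neighbourhood of an affine subspace
whose direction `A` is within distance `ν` (in operator norm of orthogonal
projections) of a fixed subspace `V` is contained in the `Cδ`-neighbourhood of a
translate of `V`, with `C` depending only on `n`. -/
theorem tilted_slab_in_cube_contained_in_parallel_slab (n : ℕ) :
    ∃ C > (0 : ℝ), ∀ δ ν : ℝ, 0 < δ → δ ≤ ν → ν ≤ 1 →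
      ∀ A V : Submodule ℝ (EuclideanSpace ℝ (Fin n)),
        Module.finrank ℝ A = Module.finrank ℝ V →
        ‖projCLM A - projCLM V‖ ≤ ν →
        ∀ x₀ q : EuclideanSpace ℝ (Fin n),
          let Q : Set (EuclideanSpace ℝ (Fin n)) :=
            {x | ∀ i, |x i - q i| ≤ δ / (2 * ν)}
          let T : Set (EuclideanSpace ℝ (Fin n)) :=
            {x | Metric.infDist x {z | z - x₀ ∈ (A : Set (EuclideanSpace ℝ (Fin n)))} ≤ δ}
          (T ∩ Q).Nonempty →
          ∃ y, T ∩ Q ⊆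
            {x | Metric.infDist x
                {z | z - y ∈ (V : Set (EuclideanSpace ℝ (Fin n)))} ≤ C * δ} := by
  refine ⟨Real.sqrt n + 4, by positivity, ?_⟩
  intro δ ν hδ hδν hν1 A V _hrank hPdist x₀ q Q T hne
  obtain ⟨p, hpT, hpQ⟩ := hne
  have hν : 0 < ν := lt_of_lt_of_le hδ hδν
  set S : Set (EuclideanSpace ℝ (Fin n)) :=
    {z | z - x₀ ∈ (A : Set (EuclideanSpace ℝ (Fin n)))} with hSdef
  have hScl : IsClosed S := by
    have : S = (fun z => z - x₀) ⁻¹' (A : Set (EuclideanSpace ℝ (Fin n))) := rfl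
    rw [this]
    exact A.closed_of_finiteDimensional.preimage (continuous_id.sub continuous_const)
  have hSne : S.Nonempty := ⟨x₀, by show x₀ - x₀ ∈ (A : Set (EuclideanSpace ℝ (Fin n))); simp⟩
  have key : ∀ x ∈ T, ∃ z, z - x₀ ∈ A ∧ ‖x - z‖ ≤ δ := by
    intro x hx
    obtain ⟨z, hz, hdz⟩ := hScl.exists_infDist_eq_dist hSne x
    exact ⟨z, hz, by rw [← dist_eq_norm, ← hdz]; exact hx⟩
  obtain ⟨zp, hzpA, hzp⟩ := key p hpT
  refine ⟨p, ?_⟩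
  rintro x ⟨hxT, hxQ⟩
  obtain ⟨zx, hzxA, hzx⟩ := key x hxT
  set u : EuclideanSpace ℝ (Fin n) := zx - zp with hu
  set w : EuclideanSpace ℝ (Fin n) := (x - zx) - (p - zp) with hwdef
  have huA : u ∈ A := by
    have := A.sub_mem hzxA hzpA
    have h2 : (zx - x₀) - (zp - x₀) = u := by rw [hu]; abel
    rwa [h2] at this
  -- coordinatewise bound
  have hcoord : ∀ i, ‖(x - p) i‖ ≤ δ / ν := by
    intro i
    have h1 := hxQ i
    have h2 := hpQ i
    have h3 : (x - p) i = (x i - q i) - (p i - q i) := by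
      simp only [PiLp.sub_apply]; ring
    rw [Real.norm_eq_abs, h3]
    have := abs_sub (x i - q i) (p i - q i)
    have h4 : δ / (2 * ν) + δ / (2 * ν) = δ / ν := by field_simp; ring
    calc |(x i - q i) - (p i - q i)| ≤ |x i - q i| + |p i - q i| := abs_sub _ _
      _ ≤ δ / (2 * ν) + δ / (2 * ν) := add_le_add h1 h2
      _ = δ / ν := h4
  have hxp_norm : ‖x - p‖ ≤ Real.sqrt n * (δ / ν) := by
    rw [EuclideanSpace.norm_eq]
    have hsum : ∑ i, ‖(x - p) i‖ ^ 2 ≤ (n : ℝ) * (δ / ν) ^ 2 := by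
      calc ∑ i, ‖(x - p) i‖ ^ 2 ≤ ∑ _i : Fin n, (δ / ν) ^ 2 :=
            Finset.sum_le_sum fun i _ => by
              have := hcoord i
              nlinarith [norm_nonneg ((x - p) i)]
        _ = (n : ℝ) * (δ / ν) ^ 2 := by simp [Finset.sum_const]
    calc Real.sqrt (∑ i, ‖(x - p) i‖ ^ 2) ≤ Real.sqrt ((n : ℝ) * (δ / ν) ^ 2) :=
          Real.sqrt_le_sqrt hsum
      _ = Real.sqrt n * (δ / ν) := by
          rw [Real.sqrt_mul (by positivity), Real.sqrt_sq (by positivity)]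
  have hw2 : ‖w‖ ≤ 2 * δ := by
    calc ‖w‖ ≤ ‖x - zx‖ + ‖p - zp‖ := norm_sub_le _ _
      _ ≤ 2 * δ := by linarith
  have hxpw : x - p = u + w := by rw [hu, hwdef]; abel
  have hu_norm : ‖u‖ ≤ Real.sqrt n * (δ / ν) + 2 * δ := by
    have h5 : u = (x - p) - w := by rw [hxpw]; abel
    rw [h5]
    calc ‖(x - p) - w‖ ≤ ‖x - p‖ + ‖w‖ := norm_sub_le _ _
      _ ≤ Real.sqrt n * (δ / ν) + 2 * δ := add_le_add hxp_norm hw2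
  have hA : ‖u - projCLM V u‖ ≤ Real.sqrt n * δ + 2 * δ := by
    have h6 : u - projCLM V u = (projCLM A - projCLM V) u := by
      simp [projCLM_eq_self huA]
    rw [h6]
    have hmain : ‖(projCLM A - projCLM V) u‖ ≤ ν * (Real.sqrt n * (δ / ν) + 2 * δ) := by
      calc ‖(projCLM A - projCLM V) u‖ ≤ ‖projCLM A - projCLM V‖ * ‖u‖ :=
            (projCLM A - projCLM V).le_opNorm u
        _ ≤ ν * (Real.sqrt n * (δ / ν) + 2 * δ) :=
            mul_le_mul hPdist hu_norm (norm_nonneg _) hν.le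
    have heq : ν * (Real.sqrt n * (δ / ν)) = Real.sqrt n * δ := by
      field_simp
    nlinarith [Real.sqrt_nonneg (n : ℝ), hδ.le, hν1, hν]
  have hfinal : ‖(x - p) - projCLM V (x - p)‖ ≤ (Real.sqrt n + 4) * δ := by
    have hsplit : (x - p) - projCLM V (x - p)
        = (u - projCLM V u) + (w - projCLM V w) := by
      rw [hxpw, map_add]; abel
    rw [hsplit]
    calc ‖(u - projCLM V u) + (w - projCLM V w)‖
        ≤ ‖u - projCLM V u‖ + ‖w - projCLM V w‖ := norm_add_le _ _
      _ ≤ (Real.sqrt n * δ + 2 * δ) + 2 * δ :=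
          add_le_add hA ((norm_sub_projCLM_le V w).trans hw2)
      _ = (Real.sqrt n + 4) * δ := by ring
  have hmem : p + projCLM V (x - p) ∈
      {z | z - p ∈ (V : Set (EuclideanSpace ℝ (Fin n)))} := by
    show p + projCLM V (x - p) - p ∈ V
    have : p + projCLM V (x - p) - p = projCLM V (x - p) := by abel
    rw [this]; exact projCLM_mem V _
  refine le_trans (Metric.infDist_le_dist_of_mem hmem) ?_
  rw [dist_eq_norm]
  have : x - (p + projCLM V (x - p)) = (x - p) - projCLM V (x - p) := by abel
  rw [this]
  exact hfinal
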